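/- Combining Pinsker's inequality, additivity of relative entropy, and the thermal-state relative-entropy bound: if Willie discriminates n i.i.d. copies of thermal distributions with mean photon numbers η_b·n̄_T and η_w·n̄ + η_b·n̄_T (η_b ∈ (0,1], η_w = 1−η_b, n̄_T > 0, n̄ ≥ 0) with uniform prior, then his minimum error probability satisfies P_e ≥ 1/2 − η_w·n̄·√n / (4·√(η_b·n̄_T·(1+η_b·n̄_T))). In particular, choosing n̄ = 4ε·√(η_b·n̄_T·(1+η_b·n̄_T)) / (√n·η_w) gives P_e ≥ 1/2 − ε. -/

import Mathlib

/-- The photon-number distribution of a single-mode thermal state with mean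
photon number `m`. -/
noncomputable def thermalPMF (m : ℝ) : ℕ → ℝ := fun k => m ^ k / (1 + m) ^ (k + 1)

private lemma sqrt_pow'' {x : ℝ} (hx : 0 ≤ x) (k : ℕ) :
    Real.sqrt (x ^ k) = (Real.sqrt x) ^ k := by
  induction k with
  | zero => simp
  | succ k ih => rw [pow_succ, pow_succ, Real.sqrt_mul (pow_nonneg hx k), ih]

private lemma sqrt_finset_prod {ι : Type*} (t : Finset ι) (c : ι → ℝ) (h : ∀ i, 0 ≤ c i) :
    Real.sqrt (∏ i ∈ t, c i) = ∏ i ∈ t, Real.sqrt (c i) := by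
  classical
  induction t using Finset.cons_induction with
  | empty => simp
  | cons i t hi ih => rw [Finset.prod_cons, Finset.prod_cons, Real.sqrt_mul (h i), ih]

private lemma thermal_nonneg {m : ℝ} (hm : 0 ≤ m) (k : ℕ) : 0 ≤ thermalPMF m k :=
  div_nonneg (pow_nonneg hm k) (pow_nonneg (by linarith) _)

private lemma thermal_hasSum {m : ℝ} (hm : 0 ≤ m) : HasSum (thermalPMF m) 1 := by
  have h1 : (0:ℝ) < 1 + m := by linarith
  have hr0 : 0 ≤ m / (1 + m) := div_nonneg hm h1.le
  have hr1 : m / (1 + m) < 1 := (div_lt_one h1).2 (by linarith)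
  have h := (hasSum_geometric_of_lt_one hr0 hr1).mul_right (1 + m)⁻¹
  have heq : (fun k : ℕ => (m / (1 + m)) ^ k * (1 + m)⁻¹) = thermalPMF m := by
    funext k
    rw [thermalPMF, div_pow, pow_succ]
    field_simp
  rw [heq] at h
  convert h using 1
  · rfl
  field_simp
  ring

private lemma hasSum_pi_prod {f : ℕ → ℝ} (hf0 : ∀ k, 0 ≤ f k) {S : ℝ} (hf : HasSum f S) :
    ∀ n : ℕ, HasSum (fun x : Fin n → ℕ => ∏ i, f (x i)) (S ^ n) := by
  intro n
  induction n with
  | zero =>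
      have he : (fun x : Fin 0 → ℕ => ∏ i, f (x i)) = fun _ => (1:ℝ) := by
        funext x; simp
      rw [he, pow_zero]
      simpa using hasSum_unique (fun _ : Fin 0 → ℕ => (1:ℝ))
  | succ n ih =>
      set F : (Fin n → ℕ) → ℝ := fun x => ∏ i, f (x i) with hF
      have hF0 : ∀ x, 0 ≤ F x :=
        fun x => Finset.prod_nonneg fun i _ => hf0 _
      have hsum : Summable (fun p : ℕ × (Fin n → ℕ) => f p.1 * F p.2) :=
        Summable.mul_of_nonneg hf.summable ih.summable hf0 hF0
      have htsum : ∑' p : ℕ × (Fin n → ℕ), f p.1 * F p.2 = S ^ (n+1) := by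
        rw [← Summable.tsum_mul_tsum hf.summable ih.summable hsum, hf.tsum_eq, ih.tsum_eq, pow_succ]
        ring
      have hprod : HasSum (fun p : ℕ × (Fin n → ℕ) => f p.1 * F p.2) (S ^ (n+1)) :=
        htsum ▸ hsum.hasSum
      refine (Fin.consEquiv (fun _ : Fin (n+1) => ℕ)).hasSum_iff.1 ?_
      have hc : ((fun x : Fin (n+1) → ℕ => ∏ i, f (x i)) ∘ (Fin.consEquiv (fun _ : Fin (n+1) => ℕ)))
          = fun p : ℕ × (Fin n → ℕ) => f p.1 * F p.2 := by
        funext p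
        simp [Fin.consEquiv, Fin.prod_univ_succ, hF]
      rw [hc]
      exact hprod

private lemma tsum_cs {ι : Type*} (u v : ι → ℝ)
    (hu : Summable (fun i => u i ^ 2)) (hv : Summable (fun i => v i ^ 2)) :
    ∑' i, |u i| * |v i| ≤ Real.sqrt (∑' i, u i ^ 2) * Real.sqrt (∑' i, v i ^ 2) := by
  have hbound : ∀ i, |u i| * |v i| ≤ (u i ^ 2 + v i ^ 2) / 2 := by
    intro i
    nlinarith [sq_nonneg (|u i| - |v i|), sq_abs (u i), sq_abs (v i)]
  have hs : Summable (fun i => |u i| * |v i|) :=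
    Summable.of_nonneg_of_le (fun i => mul_nonneg (abs_nonneg _) (abs_nonneg _)) hbound
      ((hu.add hv).div_const 2)
  refine Summable.tsum_le_of_sum_le hs ?_
  intro s
  have hcs := Finset.sum_mul_sq_le_sq_mul_sq s (fun i => |u i|) (fun i => |v i|)
  simp only [sq_abs] at hcs
  have h1 : ∑ i ∈ s, |u i| * |v i| ≤ Real.sqrt ((∑ i ∈ s, u i ^ 2) * ∑ i ∈ s, v i ^ 2) := by
    have hnn : 0 ≤ ∑ i ∈ s, |u i| * |v i| :=
      Finset.sum_nonneg fun i _ => mul_nonneg (abs_nonneg _) (abs_nonneg _)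
    calc ∑ i ∈ s, |u i| * |v i| = Real.sqrt ((∑ i ∈ s, |u i| * |v i|) ^ 2) :=
          (Real.sqrt_sq hnn).symm
      _ ≤ Real.sqrt ((∑ i ∈ s, u i ^ 2) * ∑ i ∈ s, v i ^ 2) := Real.sqrt_le_sqrt hcs
  refine h1.trans ?_
  rw [Real.sqrt_mul (Finset.sum_nonneg fun i _ => sq_nonneg _)]
  gcongr
  · exact Summable.sum_le_tsum s (fun i _ => sq_nonneg _) hu
  · exact Summable.sum_le_tsum s (fun i _ => sq_nonneg _) hv

private lemma key_identity (a d p q u v : ℝ)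
    (hp2 : p ^ 2 = a * (a + d)) (hq2 : q ^ 2 = (1 + a) * (1 + (a + d)))
    (hu2 : u ^ 2 = a * (1 + a)) (hv2 : v ^ 2 = (a + d) * (1 + (a + d)))
    (huv : u * v = p * q) :
    ((q - p) ^ 2 - 1) * (u + v) ^ 2 = d ^ 2 * (q - p) ^ 2 := by
  have hw : (p * q) ^ 2 = (a * (a + d)) * ((1 + a) * (1 + (a + d))) := by
    rw [mul_pow, hp2, hq2]
  have e1 : (u + v) ^ 2 = a * (1 + a) + (a + d) * (1 + (a + d)) + 2 * (p * q) := by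
    linear_combination hu2 + hv2 + 2 * huv
  have e2 : (q - p) ^ 2 = (1 + a) * (1 + (a + d)) + a * (a + d) - 2 * (p * q) := by
    linear_combination hq2 + hp2
  rw [e1, e2]
  linear_combination (-4 : ℝ) * hw


private lemma aux_sq_one {s w d : ℝ} (hw : 0 < w) (hid : (s ^ 2 - 1) * w ^ 2 = d ^ 2 * s ^ 2) :
    1 ≤ s ^ 2 := by nlinarith [sq_nonneg (d * s), mul_pos hw hw]

private lemma aux_one_le {s : ℝ} (h0 : 0 < s) (h2 : 1 ≤ s ^ 2) : 1 ≤ s := by nlinarith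

private lemma aux_mono {a b : ℝ} (ha : 0 ≤ a) (hab : a ≤ b) : a * (1 + a) ≤ b * (1 + b) := by
  nlinarith

private lemma aux_lt {a b : ℝ} (ha : 0 < a) (hb : 0 < b) : a * b < (1 + a) * (1 + b) := by
  nlinarith

private lemma aux_div {r d u v : ℝ} (hr : 0 ≤ r) (hd : 0 ≤ d) (hu : 0 < u) (hv : u ≤ v) :
    2 * r * d / (u + v) ≤ r * d / u := by
  rw [div_le_div_iff₀ (by linarith) hu]
  nlinarith [mul_nonneg hr hd]

set_option maxHeartbeats 2000000 in
theorem covert_thermal_willie_error (ηb nT ηw nb : ℝ) (n : ℕ)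
    (hηb0 : 0 < ηb) (hηb1 : ηb ≤ 1) (hnT : 0 < nT) (hηw : ηw = 1 - ηb)
    (hnb : 0 ≤ nb) :
    (1 / 2 - (1 / 4) * ∑' x : Fin n → ℕ,
        |(∏ i, thermalPMF (ηb * nT) (x i))
          - ∏ i, thermalPMF (ηw * nb + ηb * nT) (x i)|
      ≥ 1 / 2 - ηw * nb * Real.sqrt n
          / (4 * Real.sqrt (ηb * nT * (1 + ηb * nT))))
    ∧ ∀ ε : ℝ, 0 ≤ ε →
        nb = 4 * ε * Real.sqrt (ηb * nT * (1 + ηb * nT)) / (Real.sqrt n * ηw) →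
        1 / 2 - (1 / 4) * ∑' x : Fin n → ℕ,
            |(∏ i, thermalPMF (ηb * nT) (x i))
              - ∏ i, thermalPMF (ηw * nb + ηb * nT) (x i)|
          ≥ 1 / 2 - ε := by
  have hηw0 : 0 ≤ ηw := by rw [hηw]; linarith
  set a := ηb * nT with ha_def
  have ha : 0 < a := mul_pos hηb0 hnT
  set d := ηw * nb with hd_def
  have hd : 0 ≤ d := mul_nonneg hηw0 hnb
  set b := ηw * nb + ηb * nT with hb_def
  have hb_eq : b = a + d := by rw [hb_def]; ring
  have hb : 0 < b := by rw [hb_eq]; linarith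
  have hab : a ≤ b := by rw [hb_eq]; linarith
  have h1a : (0:ℝ) < 1 + a := by linarith
  have h1b : (0:ℝ) < 1 + b := by linarith
  set p := Real.sqrt (a * b) with hp_def
  set q := Real.sqrt ((1 + a) * (1 + b)) with hq_def
  set u := Real.sqrt (a * (1 + a)) with hu_def
  set v := Real.sqrt (b * (1 + b)) with hv_def
  have hp0 : 0 ≤ p := Real.sqrt_nonneg _
  have hq0 : 0 < q := Real.sqrt_pos.2 (by positivity)
  have hu0 : 0 < u := Real.sqrt_pos.2 (by positivity)
  have hv0 : 0 < v := Real.sqrt_pos.2 (by positivity)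
  have hp2 : p ^ 2 = a * b := Real.sq_sqrt (by positivity)
  have hq2 : q ^ 2 = (1 + a) * (1 + b) := Real.sq_sqrt (by positivity)
  have hu2 : u ^ 2 = a * (1 + a) := Real.sq_sqrt (by positivity)
  have hv2 : v ^ 2 = b * (1 + b) := Real.sq_sqrt (by positivity)
  have huv : u * v = p * q := by
    rw [hu_def, hv_def, hp_def, hq_def, ← Real.sqrt_mul (by positivity),
      ← Real.sqrt_mul (by positivity)]
    congr 1
    ring
  have hqp : p < q := by
    rw [hp_def, hq_def]
    refine Real.sqrt_lt_sqrt (by positivity) ?_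
    exact aux_lt ha hb
  set s := q - p with hs_def
  have hs0 : 0 < s := sub_pos.2 hqp
  have hvu' : a * (1 + a) ≤ b * (1 + b) := aux_mono ha.le hab
  clear_value a d b p q u v s
  have hid : (s ^ 2 - 1) * (u + v) ^ 2 = d ^ 2 * s ^ 2 := by
    rw [hs_def]
    apply key_identity a d p q u v
    · rw [hp2, hb_eq]
    · rw [hq2, hb_eq]
    · exact hu2
    · rw [hv2, hb_eq]
    · exact huv
  have huvpos : (0:ℝ) < u + v := by linarith
  have hs2 : 1 ≤ s ^ 2 := aux_sq_one huvpos hid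
  have hs1 : 1 ≤ s := aux_one_le hs0 hs2
  have hvu : u ≤ v := by
    rw [hu_def, hv_def]
    exact Real.sqrt_le_sqrt hvu'
  -- per-mode square-root function
  have hga : ∀ k, 0 ≤ thermalPMF a k := thermal_nonneg ha.le
  have hgb : ∀ k, 0 ≤ thermalPMF b k := thermal_nonneg hb.le
  set g : ℕ → ℝ := fun k => Real.sqrt (thermalPMF a k * thermalPMF b k) with hg_def
  have hg0 : ∀ k, 0 ≤ g k := fun k => Real.sqrt_nonneg _
  have hg_eq : ∀ k, g k = (p / q) ^ k * q⁻¹ := by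
    intro k
    have h1 : thermalPMF a k * thermalPMF b k = (a * b) ^ k / ((1 + a) * (1 + b)) ^ (k + 1) := by
      simp only [thermalPMF]
      rw [div_mul_div_comm, ← mul_pow, ← mul_pow]
    rw [hg_def]
    simp only []
    rw [h1, Real.sqrt_div (by positivity), sqrt_pow'' (by positivity),
      sqrt_pow'' (by positivity), ← hp_def, ← hq_def, div_pow, pow_succ]
    field_simp
  have hgsum : HasSum g s⁻¹ := by
    have hr0 : 0 ≤ p / q := div_nonneg hp0 hq0.le
    have hr1 : p / q < 1 := (div_lt_one hq0).2 hqp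
    have h := (hasSum_geometric_of_lt_one hr0 hr1).mul_right q⁻¹
    have heq : (fun k : ℕ => (p / q) ^ k * q⁻¹) = g := funext fun k => (hg_eq k).symm
    rw [heq] at h
    convert h using 1
    · rfl
    rw [hs_def]
    have hqp_ne : q - p ≠ 0 := ne_of_gt (sub_pos.2 hqp)
    rw [show (1:ℝ) - p / q = (q - p) / q by field_simp]
    rw [inv_div]
    field_simp
  -- products over n modes
  have hPa : HasSum (fun x : Fin n → ℕ => ∏ i, thermalPMF a (x i)) 1 := by
    simpa using hasSum_pi_prod hga (thermal_hasSum ha.le) n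
  have hQb : HasSum (fun x : Fin n → ℕ => ∏ i, thermalPMF b (x i)) 1 := by
    simpa using hasSum_pi_prod hgb (thermal_hasSum hb.le) n
  have hG : HasSum (fun x : Fin n → ℕ => ∏ i, g (x i)) (s⁻¹ ^ n) :=
    hasSum_pi_prod hg0 hgsum n
  set P : (Fin n → ℕ) → ℝ := fun x => ∏ i, thermalPMF a (x i) with hP_def
  set Q : (Fin n → ℕ) → ℝ := fun x => ∏ i, thermalPMF b (x i) with hQ_def
  have hP0 : ∀ x, 0 ≤ P x := fun x => Finset.prod_nonneg fun i _ => hga _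
  have hQ0 : ∀ x, 0 ≤ Q x := fun x => Finset.prod_nonneg fun i _ => hgb _
  set A : (Fin n → ℕ) → ℝ := fun x => Real.sqrt (P x) with hA_def
  set B : (Fin n → ℕ) → ℝ := fun x => Real.sqrt (Q x) with hB_def
  have hA2 : ∀ x, A x ^ 2 = P x := fun x => Real.sq_sqrt (hP0 x)
  have hB2 : ∀ x, B x ^ 2 = Q x := fun x => Real.sq_sqrt (hQ0 x)
  have hA0 : ∀ x, 0 ≤ A x := fun x => Real.sqrt_nonneg _
  have hB0 : ∀ x, 0 ≤ B x := fun x => Real.sqrt_nonneg _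
  have hAB : ∀ x, A x * B x = ∏ i, g (x i) := by
    intro x
    rw [hA_def, hB_def]
    simp only []
    rw [← Real.sqrt_mul (hP0 x), hP_def, hQ_def]
    simp only []
    rw [← Finset.prod_mul_distrib,
      sqrt_finset_prod _ _ (fun i => mul_nonneg (hga _) (hgb _))]
  set c := s⁻¹ ^ n with hc_def
  have hc0 : 0 ≤ c := pow_nonneg (by positivity) n
  have hsinv1 : s⁻¹ ≤ 1 := by
    rw [inv_le_one_iff₀]
    right; exact hs1
  have hc1 : c ≤ 1 := pow_le_one₀ (by positivity) hsinv1
  have hASq : HasSum (fun x => (A x - B x) ^ 2) (2 - 2 * c) := by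
    have h := (hPa.add hQb).sub (hG.mul_left 2)
    have heq : (fun x : Fin n → ℕ => P x + Q x - 2 * ∏ i, g (x i))
        = fun x => (A x - B x) ^ 2 := by
      funext x
      rw [← hAB x, ← hA2 x, ← hB2 x]
      ring
    rw [heq] at h
    convert h using 1
    · rfl
    rw [hc_def]; ring
  have hBSq : HasSum (fun x => (A x + B x) ^ 2) (2 + 2 * c) := by
    have h := (hPa.add hQb).add (hG.mul_left 2)
    have heq : (fun x : Fin n → ℕ => P x + Q x + 2 * ∏ i, g (x i))
        = fun x => (A x + B x) ^ 2 := by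
      funext x
      rw [← hAB x, ← hA2 x, ← hB2 x]
      ring
    rw [heq] at h
    convert h using 1
    rw [hc_def]; ring
  -- the total-variation bound
  have hTeq : ∑' x : Fin n → ℕ, |P x - Q x|
      = ∑' x : Fin n → ℕ, |A x - B x| * |A x + B x| := by
    refine tsum_congr fun x => ?_
    rw [← abs_mul, show (A x - B x) * (A x + B x) = P x - Q x by
      rw [← hA2 x, ← hB2 x]; ring]
  have hCS := tsum_cs (fun x => A x - B x) (fun x => A x + B x) hASq.summable hBSq.summable
  rw [hASq.tsum_eq, hBSq.tsum_eq] at hCS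
  have hT1 : ∑' x : Fin n → ℕ, |P x - Q x|
      ≤ Real.sqrt (2 - 2 * c) * Real.sqrt (2 + 2 * c) := by
    rw [hTeq]; exact hCS
  have h2c0 : (0:ℝ) ≤ 2 - 2 * c := by linarith
  have hsqmul : Real.sqrt (2 - 2 * c) * Real.sqrt (2 + 2 * c)
      = Real.sqrt (4 * (1 - c ^ 2)) := by
    rw [← Real.sqrt_mul h2c0]
    congr 1; ring
  -- Bernoulli bound
  have ht_id : 1 - s⁻¹ ^ 2 = d ^ 2 / (u + v) ^ 2 := by
    have hs_ne : s ≠ 0 := ne_of_gt hs0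
    have huv_ne : u + v ≠ 0 := ne_of_gt huvpos
    field_simp
    linear_combination hid
  have ht0 : 0 ≤ 1 - s⁻¹ ^ 2 := by
    rw [ht_id]; positivity
  have ht1 : 1 - s⁻¹ ^ 2 ≤ 1 := by
    have : 0 ≤ s⁻¹ ^ 2 := by positivity
    linarith
  have hber : 1 - c ^ 2 ≤ n * (1 - s⁻¹ ^ 2) := by
    have h := one_add_mul_le_pow (show (-2:ℝ) ≤ -(1 - s⁻¹ ^ 2) by linarith) n
    have hcc : (1 + -(1 - s⁻¹ ^ 2)) ^ n = c ^ 2 := by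
      rw [show (1 : ℝ) + -(1 - s⁻¹ ^ 2) = s⁻¹ ^ 2 by ring, hc_def, ← pow_mul, ← pow_mul,
        mul_comm]
    rw [hcc] at h
    linarith [h]
  have hT2 : ∑' x : Fin n → ℕ, |P x - Q x| ≤ 2 * (Real.sqrt n * (d / (u + v))) := by
    have hstep : Real.sqrt (4 * (1 - c ^ 2)) ≤ Real.sqrt (4 * (n * (1 - s⁻¹ ^ 2))) := by
      apply Real.sqrt_le_sqrt; linarith [hber]
    have hval : Real.sqrt (4 * ((n : ℝ) * (1 - s⁻¹ ^ 2))) = 2 * (Real.sqrt n * (d / (u + v))) := by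
      rw [ht_id, Real.sqrt_mul (by norm_num : (0:ℝ) ≤ 4),
        Real.sqrt_mul (Nat.cast_nonneg n), Real.sqrt_div (sq_nonneg d),
        Real.sqrt_sq hd, Real.sqrt_sq huvpos.le,
        show Real.sqrt 4 = 2 by rw [show (4:ℝ) = 2 ^ 2 by norm_num, Real.sqrt_sq]; norm_num]
    calc ∑' x : Fin n → ℕ, |P x - Q x|
        ≤ Real.sqrt (2 - 2 * c) * Real.sqrt (2 + 2 * c) := hT1
      _ = Real.sqrt (4 * (1 - c ^ 2)) := hsqmul
      _ ≤ Real.sqrt (4 * ((n:ℝ) * (1 - s⁻¹ ^ 2))) := hstep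
      _ = 2 * (Real.sqrt n * (d / (u + v))) := hval
  have hT3 : ∑' x : Fin n → ℕ, |P x - Q x| ≤ Real.sqrt n * d / u := by
    refine hT2.trans ?_
    rw [show (2:ℝ) * (Real.sqrt n * (d / (u + v))) = 2 * Real.sqrt n * d / (u + v) by ring,
      show Real.sqrt n * d / u = Real.sqrt n * d / u from rfl]
    exact aux_div (Real.sqrt_nonneg (n:ℝ)) hd hu0 hvu
  have main : 1 / 2 - (1 / 4) * ∑' x : Fin n → ℕ, |P x - Q x|
      ≥ 1 / 2 - d * Real.sqrt n / (4 * u) := by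
    have : d * Real.sqrt n / (4 * u) = (Real.sqrt n * d / u) / 4 := by ring
    rw [this]
    linarith
  refine ⟨main, ?_⟩
  intro ε hε hnb_eq
  have hbound : d * Real.sqrt n / (4 * u) ≤ ε := by
    by_cases h : Real.sqrt n * ηw = 0
    · have hnb0 : nb = 0 := by rw [hnb_eq, h, div_zero]
      rw [hd_def, hnb0, mul_zero, zero_mul, zero_div]
      exact hε
    · obtain ⟨hn0, hw0⟩ := mul_ne_zero_iff.1 h
      have hu_ne : u ≠ 0 := ne_of_gt hu0
      have hu_ne' : u ≠ 0 := ne_of_gt hu0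
      have heq : ηw * (4 * ε * u / (Real.sqrt n * ηw)) * Real.sqrt n / (4 * u) = ε := by
        field_simp
      rw [hd_def, hnb_eq, heq]
  linarith [main, hbound]
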